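/- (Ostrowski) Every absolute value m on the field ℚ of rational numbers is either the trivial absolute value, a power |·|^ρ (0 < ρ ≤ 1 suffices for being an absolute value, but any positive power of the archimedean one arising this way) of the usual absolute value, or a positive power of a p-adic absolute value for some prime p. -/

import Mathlib

open Rat.AbsoluteValue in
/-- Ostrowski's theorem: every absolute value on ℚ is trivial, a positive
power of the usual absolute value, or a positive power of a p-adic
absolute value. -/
theorem ostrowski_rat (m : ℚ → ℝ)
    (h_nonneg : ∀ a, 0 ≤ m a)
    (h_zero : m 0 = 0) (h_one : m 1 = 1)
    (h_mul : ∀ a b, m (a * b) = m a * m b)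
    (h_add : ∀ a b, m (a + b) ≤ m a + m b) :
    (∀ a : ℚ, a ≠ 0 → m a = 1) ∨
    (∃ ρ : ℝ, 0 < ρ ∧ ∀ a : ℚ, m a = |(a : ℝ)| ^ ρ) ∨
    (∃ p : ℕ, p.Prime ∧ ∃ ρ : ℝ, 0 < ρ ∧ ∀ a : ℚ, m a = (padicNorm p a : ℝ) ^ ρ) := by
  by_cases htriv : ∀ a : ℚ, a ≠ 0 → m a = 1
  · exact Or.inl htriv
  have hne : ∀ a : ℚ, a ≠ 0 → m a ≠ 0 := by
    intro a ha hma
    have := h_mul a a⁻¹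
    rw [mul_inv_cancel₀ ha, h_one, hma, zero_mul] at this
    exact one_ne_zero this
  have hneg1 : m (-1) = 1 := by
    have h2 : m (-1) * m (-1) = 1 := by rw [← h_mul]; norm_num [h_one]
    nlinarith [h_nonneg (-1)]
  have hneg : ∀ a : ℚ, m (-a) = m a := by
    intro a
    have : m (-a) = m (-1) * m a := by rw [← h_mul]; ring_nf
    rw [this, hneg1, one_mul]
  set f : MulRingNorm ℚ :=
    { toFun := m
      map_zero' := h_zero
      add_le' := h_add
      neg' := hneg
      eq_zero_of_map_eq_zero' := fun a h => by
        by_contra ha; exact hne a ha h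
      map_one' := h_one
      map_mul' := h_mul } with hf
  have hfa : ∀ a : ℚ, f a = m a := fun a => rfl
  have hfne : f ≠ 1 := by
    intro h
    apply htriv
    intro a ha
    rw [← hfa, h]
    simp [ha]
  have key : (∃ c : ℝ, 0 < c ∧ (fun x => f x ^ c) = ⇑real) ∨
      ∃! p, ∃ (_ : Fact p.Prime), ∃ c : ℝ, 0 < c ∧ (fun x => f x ^ c) = ⇑(padic p) := by
    let g : AbsoluteValue ℚ ℝ :=
      { toFun := m, map_mul' := h_mul, nonneg' := h_nonneg,
        eq_zero' := fun a => ⟨fun h => by_contra fun ha => hne a ha h, fun h => h ▸ h_zero⟩,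
        add_le' := h_add }
    have hg : g.IsNontrivial := by
      by_contra hg; exact htriv ((AbsoluteValue.not_isNontrivial_iff g).mp hg)
    rcases equiv_real_or_padic g hg with h | ⟨p, ⟨hp, h⟩, hu⟩
    · exact Or.inl (AbsoluteValue.isEquiv_iff_exists_rpow_eq.mp h)
    · exact Or.inr ⟨p, ⟨hp, AbsoluteValue.isEquiv_iff_exists_rpow_eq.mp h⟩,
        fun q ⟨hq, hq'⟩ => hu q ⟨hq, AbsoluteValue.isEquiv_iff_exists_rpow_eq.mpr hq'⟩⟩
  rcases key with h | ⟨p, ⟨hp, c, hc, hfc⟩, _⟩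
  · obtain ⟨c, hc, hfc⟩ := h
    refine Or.inr (Or.inl ⟨c⁻¹, by positivity, fun a => ?_⟩)
    have hx := congrFun hfc a
    rw [hfa] at hx
    have : real a = |(a : ℝ)| := by rw [real_eq_abs, Rat.cast_abs]
    rw [this] at hx
    rw [← hx, Real.rpow_rpow_inv (h_nonneg a) (ne_of_gt hc)]
  · refine Or.inr (Or.inr ⟨p, hp.out, c⁻¹, by positivity, fun a => ?_⟩)
    have hx := congrFun hfc a
    rw [hfa] at hx
    have : padic p a = ((padicNorm p a : ℚ) : ℝ) := rfl
    rw [this] at hx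
    rw [← hx, Real.rpow_rpow_inv (h_nonneg a) (ne_of_gt hc)]
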